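/- Define φ(x) = [(-60/63)∫₀ˣ(1-t)(1+t)³dt + 12∫₀ˣ(1-t)(1+t)dt] / [(-60/63)(1+x)³ + 12(1+x)] for x ∈ [0,2]. Then the denominator is strictly positive on [0,2], φ(0) = 0, φ(2) = 0, φ'(0) = 1, φ'(2) = -1, and φ(x) > 0 for x ∈ (0,2). -/

import Mathlib

lemma int1 (x : ℝ) : (∫ t in (0:ℝ)..x, (1 - t) * (1 + t) ^ 3)
    = x + x^2 - x^4/2 - x^5/5 := by
  have h : ∀ t ∈ Set.uIcc (0:ℝ) x,
      HasDerivAt (fun t : ℝ => t + t^2 - t^4/2 - t^5/5) ((1 - t) * (1 + t) ^ 3) t := by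
    intro t _
    have := (((hasDerivAt_id t).add (hasDerivAt_pow 2 t)).sub
      ((hasDerivAt_pow 4 t).div_const 2)).sub ((hasDerivAt_pow 5 t).div_const 5)
    refine this.congr_deriv ?_
    ring
  rw [intervalIntegral.integral_eq_sub_of_hasDerivAt h
    (by apply Continuous.intervalIntegrable; continuity)]
  ring

lemma int2 (x : ℝ) : (∫ t in (0:ℝ)..x, (1 - t) * (1 + t))
    = x - x^3/3 := by
  have h : ∀ t ∈ Set.uIcc (0:ℝ) x,
      HasDerivAt (fun t : ℝ => t - t^3/3) ((1 - t) * (1 + t)) t := by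
    intro t _
    have := (hasDerivAt_id t).sub ((hasDerivAt_pow 3 t).div_const 3)
    refine this.congr_deriv ?_
    ring
  rw [intervalIntegral.integral_eq_sub_of_hasDerivAt h
    (by apply Continuous.intervalIntegrable; continuity)]
  ring

lemma hasDerivN (a : ℝ) : HasDerivAt
    (fun x : ℝ => (-60/63) * (x + x^2 - x^4/2 - x^5/5) + 12 * (x - x^3/3))
    ((-60/63) * (1 + 2*a - 4*a^3/2 - 5*a^4/5) + 12 * (1 - 3*a^2/3)) a := by
  have h1 := (((hasDerivAt_id a).add (hasDerivAt_pow 2 a)).sub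
    ((hasDerivAt_pow 4 a).div_const 2)).sub ((hasDerivAt_pow 5 a).div_const 5)
  have h2 := (hasDerivAt_id a).sub ((hasDerivAt_pow 3 a).div_const 3)
  have := (h1.const_mul ((-60:ℝ)/63)).add (h2.const_mul (12:ℝ))
  refine this.congr_deriv ?_
  ring

lemma hasDerivD (a : ℝ) : HasDerivAt
    (fun x : ℝ => (-60/63) * (1 + x)^3 + 12 * (1 + x))
    ((-60/63) * (3 * (1 + a)^2) + 12 * 1) a := by
  have h0 : HasDerivAt (fun x : ℝ => 1 + x) 1 a := (hasDerivAt_id a).const_add 1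
  have h1 : HasDerivAt (fun x : ℝ => (1 + x)^3) (3 * (1 + a)^2 * 1) a := h0.pow 3
  have := (h1.const_mul ((-60:ℝ)/63)).add (h0.const_mul (12:ℝ))
  refine this.congr_deriv ?_
  ring

theorem stmt_16 (φ : ℝ → ℝ)
    (hφ : ∀ x, φ x =
      ((-60 / 63) * (∫ t in (0:ℝ)..x, (1 - t) * (1 + t) ^ 3) +
          12 * (∫ t in (0:ℝ)..x, (1 - t) * (1 + t))) /
        ((-60 / 63) * (1 + x) ^ 3 + 12 * (1 + x))) :
    (∀ x ∈ Set.Icc (0:ℝ) 2, 0 < (-60 / 63) * (1 + x) ^ 3 + 12 * (1 + x)) ∧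
      φ 0 = 0 ∧ φ 2 = 0 ∧ HasDerivAt φ 1 0 ∧ HasDerivAt φ (-1) 2 ∧
      ∀ x ∈ Set.Ioo (0:ℝ) 2, 0 < φ x := by
  have hφ' : ∀ x, φ x =
      ((-60/63) * (x + x^2 - x^4/2 - x^5/5) + 12 * (x - x^3/3)) /
        ((-60/63) * (1 + x)^3 + 12 * (1 + x)) := by
    intro x; rw [hφ, int1, int2]
  have hfun : φ = fun x : ℝ =>
      ((-60/63) * (x + x^2 - x^4/2 - x^5/5) + 12 * (x - x^3/3)) /
        ((-60/63) * (1 + x)^3 + 12 * (1 + x)) := funext hφ'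
  have hD : ∀ x ∈ Set.Icc (0:ℝ) 2, 0 < (-60 / 63) * (1 + x) ^ 3 + 12 * (1 + x) := by
    intro x hx
    obtain ⟨h0, h2⟩ := hx
    nlinarith [sq_nonneg x, sq_nonneg (1+x), mul_nonneg h0 (sub_nonneg.2 h2)]
  refine ⟨hD, ?_, ?_, ?_, ?_, ?_⟩
  · rw [hφ']; norm_num
  · rw [hφ']; norm_num
  · rw [hfun]
    have hne : (-60/63) * (1 + (0:ℝ))^3 + 12 * (1 + 0) ≠ 0 := by norm_num
    have := (hasDerivN 0).div (hasDerivD 0) hne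
    refine this.congr_deriv ?_
    norm_num
  · rw [hfun]
    have hne : (-60/63) * (1 + (2:ℝ))^3 + 12 * (1 + 2) ≠ 0 := by norm_num
    have := (hasDerivN 2).div (hasDerivD 2) hne
    refine this.congr_deriv ?_
    norm_num
  · intro x hx
    obtain ⟨h0, h2⟩ := hx
    rw [hφ']
    apply div_pos
    · nlinarith [mul_pos h0 (sub_pos.2 h2), sq_nonneg x, mul_pos (mul_pos h0 h0) (sub_pos.2 h2), mul_pos (mul_pos h0 (sub_pos.2 h2)) (sub_pos.2 h2), mul_pos (mul_pos (mul_pos h0 h0) h0) (sub_pos.2 h2)]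
    · exact hD x ⟨le_of_lt h0, le_of_lt h2⟩
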